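/- Let X = ℝ∖{0} with x ≼ y iff |x| ≤ |y| and sgn(x) ≤ sgn(y). Then (X,≼) is a partial order admitting a multi-utility of two functions, but any family (f_i)_{i∈I} of functions satisfying: f_i(x) = f_i(y) when x ~ y, f_i(x) < f_i(y) for all i when x ≺ y, and for incomparable x,y some f_i increases and some f_j decreases, must be infinite. -/
import Mathlib


/-- The ground set `ℝ \ {0}`. -/
def X10 : Type := {x : ℝ // x ≠ 0}

/-- `x ≼ y` iff `|x| ≤ |y|` and `sgn x ≤ sgn y`. -/
def le10 (x y : X10) : Prop := |x.1| ≤ |y.1| ∧ Real.sign x.1 ≤ Real.sign y.1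

/-- Positive element of `X10`. -/
def posX (a : ℝ) (ha : 0 < a) : X10 := ⟨a, ha.ne'⟩

/-- Negative element of `X10`. -/
def negX (a : ℝ) (ha : 0 < a) : X10 := ⟨-a, by simpa using ha.ne'⟩

lemma posX_val (a : ℝ) (ha : 0 < a) : (posX a ha).1 = a := rfl
lemma negX_val (a : ℝ) (ha : 0 < a) : (negX a ha).1 = -a := rfl

lemma abs_posX (a : ℝ) (ha : 0 < a) : |(posX a ha).1| = a := abs_of_pos ha
lemma abs_negX (a : ℝ) (ha : 0 < a) : |(negX a ha).1| = a := by
  rw [negX_val, abs_neg]; exact abs_of_pos ha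
lemma sign_posX (a : ℝ) (ha : 0 < a) : Real.sign (posX a ha).1 = 1 := Real.sign_of_pos ha
lemma sign_negX (a : ℝ) (ha : 0 < a) : Real.sign (negX a ha).1 = -1 :=
  Real.sign_of_neg (by simpa [negX_val] using ha)

lemma lt10_pos_pos {a b : ℝ} (ha : 0 < a) (hb : 0 < b) (h : a < b) :
    le10 (posX a ha) (posX b hb) ∧ ¬ le10 (posX b hb) (posX a ha) := by
  constructor
  · exact ⟨by rw [abs_posX, abs_posX]; exact h.le, by rw [sign_posX, sign_posX]⟩
  · intro hle
    have := hle.1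
    rw [abs_posX, abs_posX] at this
    linarith

lemma lt10_neg_pos {a b : ℝ} (ha : 0 < a) (hb : 0 < b) (h : a ≤ b) :
    le10 (negX a ha) (posX b hb) ∧ ¬ le10 (posX b hb) (negX a ha) := by
  constructor
  · exact ⟨by rw [abs_negX, abs_posX]; exact h, by rw [sign_negX, sign_posX]; norm_num⟩
  · intro hle
    have := hle.2
    rw [sign_negX, sign_posX] at this
    linarith

lemma incomp10 {a b : ℝ} (ha : 0 < a) (hb : 0 < b) (h : b < a) :
    ¬ le10 (negX a ha) (posX b hb) ∧ ¬ le10 (posX b hb) (negX a ha) := by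
  constructor
  · intro hle
    have := hle.1
    rw [abs_negX, abs_posX] at this
    linarith
  · intro hle
    have := hle.2
    rw [sign_negX, sign_posX] at this
    linarith

/-- `(ℝ \ {0}, ≼)` is a partial order with a two-function multi-utility, but any
family of strict monotones forming a strict monotone multi-utility must be infinite. -/
theorem two_multiutility_but_no_finite_strict_monotone_multiutility :
    (∀ x, le10 x x) ∧ (∀ x y z, le10 x y → le10 y z → le10 x z) ∧
    (∀ x y, le10 x y → le10 y x → x = y) ∧
    (∃ u₁ u₂ : X10 → ℝ, ∀ x y, le10 x y ↔ u₁ x ≤ u₁ y ∧ u₂ x ≤ u₂ y) ∧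
    (∀ (ι : Type) (f : ι → X10 → ℝ),
      (∀ i x y, le10 x y → le10 y x → f i x = f i y) →
      (∀ i x y, le10 x y → ¬ le10 y x → f i x < f i y) →
      (∀ x y, ¬ le10 x y → ¬ le10 y x →
        (∃ i, f i y < f i x) ∧ (∃ j, f j x < f j y)) →
      Infinite ι) := by
  refine ⟨fun x => ⟨le_refl _, le_refl _⟩,
    fun x y z hxy hyz => ⟨hxy.1.trans hyz.1, hxy.2.trans hyz.2⟩, ?_,
    ⟨fun x => |x.1|, fun x => Real.sign x.1, fun x y => Iff.rfl⟩, ?_⟩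
  · -- antisymmetry
    intro x y hxy hyx
    have habs : |x.1| = |y.1| := le_antisymm hxy.1 hyx.1
    have hsgn : Real.sign x.1 = Real.sign y.1 := le_antisymm hxy.2 hyx.2
    apply Subtype.ext
    rcases x.2.lt_or_gt with hx | hx <;> rcases y.2.lt_or_gt with hy | hy
    · rw [abs_of_neg hx, abs_of_neg hy] at habs; linarith
    · rw [Real.sign_of_neg hx, Real.sign_of_pos hy] at hsgn; norm_num at hsgn
    · rw [Real.sign_of_pos hx, Real.sign_of_neg hy] at hsgn; norm_num at hsgn
    · rw [abs_of_pos hx, abs_of_pos hy] at habs; exact habs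
  · -- no finite strict monotone multi-utility
    intro ι f h1 h2 h3
    by_contra hinf
    have hfin : Finite ι := not_infinite_iff_finite.mp hinf
    -- strict monotonicity consequences
    have mono_pos : ∀ i {a b : ℝ} (ha : 0 < a) (hb : 0 < b), a < b →
        f i (posX a ha) < f i (posX b hb) := by
      intro i a b ha hb h
      exact h2 i _ _ (lt10_pos_pos ha hb h).1 (lt10_pos_pos ha hb h).2
    have mono_np : ∀ i {a b : ℝ} (ha : 0 < a) (hb : 0 < b), a ≤ b →
        f i (negX a ha) < f i (posX b hb) := by
      intro i a b ha hb h
      exact h2 i _ _ (lt10_neg_pos ha hb h).1 (lt10_neg_pos ha hb h).2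
    have dec_wit : ∀ {a b : ℝ} (ha : 0 < a) (hb : 0 < b), b < a →
        ∃ i, f i (posX b hb) < f i (negX a ha) := by
      intro a b ha hb h
      exact (h3 (negX _ ha) (posX _ hb) (incomp10 ha hb h).1 (incomp10 ha hb h).2).1
    -- key: for each a there is a single index decreasing on all pairs (b, a), b < a
    have key : ∀ (a : ℝ) (ha : 0 < a), ∃ k, ∀ (b : ℝ) (hb : 0 < b), b < a →
        f k (posX b hb) < f k (negX a ha) := by
      intro a ha
      have hbn : ∀ n : ℕ, 0 < a * ((n + 1) / (n + 2)) ∧ a * ((n + 1) / (n + 2)) < a := by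
        intro n
        have h2n : (0:ℝ) < (n:ℝ) + 2 := by positivity
        constructor
        · positivity
        · have : ((n:ℝ) + 1) / ((n:ℝ) + 2) < 1 := by
            rw [div_lt_one h2n]; linarith
          nlinarith
      choose g hg using fun n : ℕ => dec_wit ha (hbn n).1 (hbn n).2
      obtain ⟨k, hk⟩ := Finite.exists_infinite_fiber g
      refine ⟨k, fun b hb hba => ?_⟩
      have hkS : (g ⁻¹' {k}).Infinite := Set.infinite_coe_iff.mp hk
      -- pick n with b < a*(n+1)/(n+2)
      obtain ⟨n, hn⟩ := exists_nat_gt ((2 * b - a) / (a - b))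
      obtain ⟨m, hmS, hmn⟩ := hkS.exists_gt n
      have hab : 0 < a - b := by linarith
      have hn' : 2 * b - a < (n:ℝ) * (a - b) := by
        rw [div_lt_iff₀ hab] at hn; linarith
      have hnm : (n:ℝ) ≤ (m:ℝ) := by exact_mod_cast hmn.le
      have hblt : b < a * (((m:ℕ) + 1) / ((m:ℕ) + 2)) := by
        rw [← mul_div_assoc, lt_div_iff₀ (by positivity), ← sub_pos]
        nlinarith
      have hgm : g m = k := hmS
      have step1 : f k (posX b hb) < f k (posX _ (hbn m).1) := mono_pos k hb (hbn m).1 hblt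
      have step2 : f k (posX _ (hbn m).1) < f k (negX a ha) := by
        rw [← hgm]; exact hg m
      linarith
    -- select index and rational for each a
    have sel : ∀ (a : ℝ) (ha : 0 < a), ∃ p : ι × ℚ,
        (∀ (b : ℝ) (hb : 0 < b), b < a → f p.1 (posX b hb) < f p.1 (negX a ha)) ∧
        f p.1 (negX a ha) < (p.2 : ℝ) ∧ (p.2 : ℝ) < f p.1 (posX a ha) := by
      intro a ha
      obtain ⟨k, hk⟩ := key a ha
      obtain ⟨q, hq1, hq2⟩ := exists_rat_btwn (mono_np k ha ha le_rfl)
      exact ⟨⟨k, q⟩, hk, hq1, hq2⟩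
    choose P hP1 hP2 hP3 using sel
    -- the map a ↦ P a is injective on positive reals
    have step : ∀ (x y : {a : ℝ // 0 < a}), x.1 < y.1 → P x.1 x.2 = P y.1 y.2 → False := by
      intro x y hlt heq
      have h1 : ((P x.1 x.2).2 : ℝ) < f (P x.1 x.2).1 (posX x.1 x.2) := hP3 _ _
      have h2' : f (P y.1 y.2).1 (posX x.1 x.2) < f (P y.1 y.2).1 (negX y.1 y.2) :=
        hP1 y.1 y.2 x.1 x.2 hlt
      have h3' : f (P y.1 y.2).1 (negX y.1 y.2) < ((P y.1 y.2).2 : ℝ) := hP2 _ _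
      rw [heq] at h1
      linarith
    have hinj : Function.Injective (fun a : {a : ℝ // 0 < a} => P a.1 a.2) := by
      intro x y hxy
      rcases lt_trichotomy x.1 y.1 with h | h | h
      · exact absurd hxy (fun he => step x y h he)
      · exact Subtype.ext h
      · exact absurd hxy.symm (fun he => step y x h he)
    have hE : Function.Injective (fun t : ℝ => (⟨Real.exp t, Real.exp_pos t⟩ : {a : ℝ // 0 < a})) := by
      intro t s h
      exact Real.exp_injective (congrArg Subtype.val h)
    have : Countable ℝ := (hinj.comp hE).countable
    exact Cardinal.not_countable_real Set.countable_univ
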